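/- For every ε>0, the curves x₁(t)=ε·sin(t/ε), x₂(t)=ε·cos(t/ε)−ε, x₃(t)=ε·(t/2−ε·sin(2t/ε)/4), together with the momenta ξ₁(t)=cos(t/ε)/2, ξ₂(t)=0, ξ₃(t)=1/(2ε), define a global solution of the Heisenberg bicharacteristic system which moreover satisfies g*(x(t),ξ(t))=1/4 for every t∈ℝ and has x(0)=0. -/

import Mathlib

/-- The Heisenberg bicharacteristic system: the Hamiltonian system on ℝ³×ℝ³ associated with
`g*(x,ξ) = ξ₁² + (ξ₂ - x₁ξ₃)²`, on a set `I` of times. -/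
def HeisenbergBichar (x₁ x₂ x₃ ξ₁ ξ₂ ξ₃ : ℝ → ℝ) (I : Set ℝ) : Prop :=
  ∀ t ∈ I,
    HasDerivAt x₁ (2 * ξ₁ t) t ∧
    HasDerivAt x₂ (2 * (ξ₂ t - x₁ t * ξ₃ t)) t ∧
    HasDerivAt x₃ (-2 * x₁ t * (ξ₂ t - x₁ t * ξ₃ t)) t ∧
    HasDerivAt ξ₁ (2 * ξ₃ t * (ξ₂ t - x₁ t * ξ₃ t)) t ∧
    HasDerivAt ξ₂ 0 t ∧
    HasDerivAt ξ₃ 0 t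

/-- For every ε>0, the explicit spiraling curves, together with the given momenta, define a
global solution of the Heisenberg bicharacteristic system with `g* ≡ 1/4` and `x(0) = 0`. -/
theorem stmt_0 (ε : ℝ) (hε : 0 < ε) :
    HeisenbergBichar
      (fun t => ε * Real.sin (t / ε))
      (fun t => ε * Real.cos (t / ε) - ε)
      (fun t => ε * (t / 2 - ε * Real.sin (2 * t / ε) / 4))
      (fun t => Real.cos (t / ε) / 2)
      (fun _ => 0)
      (fun _ => 1 / (2 * ε))
      Set.univ ∧
    (∀ t : ℝ,
      (Real.cos (t / ε) / 2) ^ 2 +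
        ((0 : ℝ) - (ε * Real.sin (t / ε)) * (1 / (2 * ε))) ^ 2 = 1 / 4) ∧
    ε * Real.sin (0 / ε) = 0 ∧
    ε * Real.cos (0 / ε) - ε = 0 ∧
    ε * (0 / 2 - ε * Real.sin (2 * 0 / ε) / 4) = 0 := by
  have hne : ε ≠ 0 := hε.ne'
  refine ⟨?_, ?_, by simp, by simp, by simp⟩
  · intro t _
    have hid : HasDerivAt (fun t : ℝ => t / ε) (1 / ε) t := by
      simpa using (hasDerivAt_id t).div_const ε
    have hsin : HasDerivAt (fun t : ℝ => Real.sin (t / ε))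
        (Real.cos (t / ε) * (1 / ε)) t :=
      by have h := (Real.hasDerivAt_sin (t / ε)).comp t hid; exact h
    have hcos : HasDerivAt (fun t : ℝ => Real.cos (t / ε))
        (-Real.sin (t / ε) * (1 / ε)) t :=
      by have h := (Real.hasDerivAt_cos (t / ε)).comp t hid; exact h
    have hid2 : HasDerivAt (fun t : ℝ => 2 * t / ε) (2 / ε) t := by
      simpa using ((hasDerivAt_id t).const_mul 2).div_const ε
    have hsin2 : HasDerivAt (fun t : ℝ => Real.sin (2 * t / ε))
        (Real.cos (2 * t / ε) * (2 / ε)) t :=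
      by have h := (Real.hasDerivAt_sin (2 * t / ε)).comp t hid2; exact h
    have hcos2m : Real.cos (2 * t / ε) = 1 - 2 * Real.sin (t / ε) ^ 2 := by
      rw [mul_div_assoc, Real.cos_two_mul]
      nlinarith [Real.sin_sq_add_cos_sq (t / ε)]
    refine ⟨?_, ?_, ?_, ?_, hasDerivAt_const t 0, hasDerivAt_const t _⟩
    · refine (hsin.const_mul ε).congr_deriv ?_
      field_simp
    · have := (hcos.const_mul ε).sub_const ε
      refine this.congr_deriv ?_
      field_simp
      ring
    · have h3 : HasDerivAt (fun t : ℝ => ε * (t / 2 - ε * Real.sin (2 * t / ε) / 4))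
          (ε * (1 / 2 - ε * (Real.cos (2 * t / ε) * (2 / ε)) / 4)) t :=
        (((hasDerivAt_id t).div_const 2).sub ((hsin2.const_mul ε).div_const 4)).const_mul ε
      refine h3.congr_deriv ?_
      rw [hcos2m]
      field_simp
      ring
    · refine (hcos.div_const 2).congr_deriv ?_
      field_simp
      ring
  · intro t
    have := Real.sin_sq_add_cos_sq (t / ε)
    field_simp
    nlinarith [Real.sin_sq_add_cos_sq (t / ε)]
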